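/- Let n ≥ 3 be an integer, let μ, L' > 0, G > 0, and δ = 2π/n. Define f_1(x,y) = (μ/2)x² + (L'/2)y² − Gx and f_i = f_1 ∘ R_{i−1}^{−1} where R_j is the rotation by angle jδ. Then the average F(x,y) = (1/n)∑_{i=1}^n f_i(x,y) equals ((μ + L')/4)(x² + y²). -/
import Mathlib


open Finset Real

lemma sum_exp_mul_I_eq_zero (n : ℕ) (θ : ℝ)
    (h1 : Complex.exp (θ * Complex.I) ≠ 1)
    (h2 : Complex.exp (θ * Complex.I) ^ n = 1) :
    ∑ i ∈ Finset.range n, Complex.exp (((i : ℝ) * θ : ℝ) * Complex.I) = 0 := by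
  have key : ∀ i : ℕ, Complex.exp (((i : ℝ) * θ : ℝ) * Complex.I)
      = Complex.exp (θ * Complex.I) ^ i := by
    intro i
    rw [← Complex.exp_nat_mul]
    push_cast
    ring_nf
  simp_rw [key]
  rw [geom_sum_eq h1, h2]
  simp

lemma sum_cos_sin_eq_zero (n : ℕ) (θ : ℝ)
    (h1 : Complex.exp (θ * Complex.I) ≠ 1)
    (h2 : Complex.exp (θ * Complex.I) ^ n = 1) :
    (∑ i ∈ Finset.range n, Real.cos ((i : ℝ) * θ)) = 0 ∧
    (∑ i ∈ Finset.range n, Real.sin ((i : ℝ) * θ)) = 0 := by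
  have h := sum_exp_mul_I_eq_zero n θ h1 h2
  have hre : (∑ i ∈ Finset.range n, Complex.exp (((i : ℝ) * θ : ℝ) * Complex.I)).re
      = ∑ i ∈ Finset.range n, Real.cos ((i : ℝ) * θ) := by
    rw [Complex.re_sum]
    exact Finset.sum_congr rfl fun i _ => Complex.exp_ofReal_mul_I_re _
  have him : (∑ i ∈ Finset.range n, Complex.exp (((i : ℝ) * θ : ℝ) * Complex.I)).im
      = ∑ i ∈ Finset.range n, Real.sin ((i : ℝ) * θ) := by
    rw [Complex.im_sum]
    exact Finset.sum_congr rfl fun i _ => Complex.exp_ofReal_mul_I_im _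
  rw [h] at hre him
  exact ⟨hre.symm, him.symm⟩

lemma exp_ne_one_of (θ : ℝ) (h0 : 0 < θ) (hlt : θ < 2 * Real.pi) :
    Complex.exp (θ * Complex.I) ≠ 1 := by
  intro h
  rw [Complex.exp_eq_one_iff] at h
  obtain ⟨k, hk⟩ := h
  have h' : (θ : ℂ) = (k : ℂ) * (2 * Real.pi) :=
    mul_right_cancel₀ Complex.I_ne_zero (by linear_combination hk)
  have hθ : θ = (k : ℝ) * (2 * Real.pi) := by exact_mod_cast h'
  have hpi := Real.pi_pos
  rcases le_or_gt k 0 with hk0 | hk0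
  · have : (k : ℝ) * (2 * Real.pi) ≤ 0 := by
      apply mul_nonpos_of_nonpos_of_nonneg
      · exact_mod_cast hk0
      · positivity
    linarith
  · have hk1 : (1 : ℝ) ≤ (k : ℝ) := by exact_mod_cast hk0
    nlinarith

theorem rotated_components_average (n : ℕ) (hn : 3 ≤ n) (μ L' G : ℝ)
    (hμ : 0 < μ) (hL' : 0 < L') (hG : 0 < G)
    (f₁ : ℝ → ℝ → ℝ) (hf₁ : ∀ x y, f₁ x y = (μ / 2) * x ^ 2 + (L' / 2) * y ^ 2 - G * x)
    (δ : ℝ) (hδ : δ = 2 * Real.pi / n) (x y : ℝ) :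
    (1 / (n : ℝ)) * ∑ i ∈ Finset.range n,
      f₁ (x * Real.cos (i * δ) + y * Real.sin (i * δ))
         (-x * Real.sin (i * δ) + y * Real.cos (i * δ)) =
      ((μ + L') / 4) * (x ^ 2 + y ^ 2) := by
  have hpi := Real.pi_pos
  have hn0 : (0 : ℝ) < n := by positivity
  have hnC : (n : ℂ) ≠ 0 := by exact_mod_cast hn0.ne'
  have hnR : (3 : ℝ) ≤ n := by exact_mod_cast hn
  have hδpos : 0 < δ := by rw [hδ]; positivity
  have h1 : Complex.exp (δ * Complex.I) ≠ 1 := by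
    apply exp_ne_one_of δ hδpos
    rw [hδ, div_lt_iff₀ hn0]
    nlinarith
  have h2 : Complex.exp (δ * Complex.I) ^ n = 1 := by
    rw [← Complex.exp_nat_mul, hδ]
    push_cast
    rw [show (n : ℂ) * (2 * Real.pi / n * Complex.I) = 2 * Real.pi * Complex.I by
      field_simp]
    simpa using Complex.exp_int_mul_two_pi_mul_I 1
  have h1' : Complex.exp (((2 * δ : ℝ)) * Complex.I) ≠ 1 := by
    apply exp_ne_one_of (2 * δ) (by linarith)
    rw [hδ, show 2 * (2 * Real.pi / n) = 4 * Real.pi / n by ring, div_lt_iff₀ hn0]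
    nlinarith
  have h2' : Complex.exp (((2 * δ : ℝ)) * Complex.I) ^ n = 1 := by
    rw [← Complex.exp_nat_mul, hδ]
    push_cast
    rw [show (n : ℂ) * (2 * (2 * Real.pi / n) * Complex.I)
        = (2 : ℤ) * (2 * Real.pi * Complex.I) by field_simp; ring]
    exact Complex.exp_int_mul_two_pi_mul_I 2
  obtain ⟨hc, hs⟩ := sum_cos_sin_eq_zero n δ h1 h2
  obtain ⟨hc2, hs2⟩ := sum_cos_sin_eq_zero n (2 * δ) h1' h2'
  have hc2' : ∑ i ∈ Finset.range n, Real.cos (2 * ((i : ℝ) * δ)) = 0 := by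
    rw [← hc2]; apply Finset.sum_congr rfl; intro i _; ring_nf
  have hs2' : ∑ i ∈ Finset.range n, Real.sin (2 * ((i : ℝ) * δ)) = 0 := by
    rw [← hs2]; apply Finset.sum_congr rfl; intro i _; ring_nf
  have key : ∀ i : ℕ,
      f₁ (x * Real.cos (i * δ) + y * Real.sin (i * δ))
         (-x * Real.sin (i * δ) + y * Real.cos (i * δ)) =
      ((μ + L') / 4) * (x ^ 2 + y ^ 2)
        + ((μ - L') / 4 * (x ^ 2 - y ^ 2)) * Real.cos (2 * ((i : ℝ) * δ))
        + ((μ - L') / 2 * (x * y)) * Real.sin (2 * ((i : ℝ) * δ))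
        - (G * x) * Real.cos ((i : ℝ) * δ)
        - (G * y) * Real.sin ((i : ℝ) * δ) := by
    intro i
    rw [hf₁, Real.cos_two_mul, Real.sin_two_mul]
    linear_combination (μ / 2 * y ^ 2 + L' / 2 * x ^ 2) *
      Real.sin_sq_add_cos_sq ((i : ℝ) * δ)
  simp_rw [key]
  rw [Finset.sum_sub_distrib, Finset.sum_sub_distrib, Finset.sum_add_distrib,
    Finset.sum_add_distrib]
  simp only [← Finset.mul_sum]
  rw [hc, hs, hc2', hs2', Finset.sum_const, Finset.card_range]
  field_simp
  ring
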